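/- Let n be a natural number and let w and w' be two words over the alphabet of all subsets of {1,…,n} such that every letter of w and every letter of w' has cardinality exactly ⌊n/2⌋, and such that the set of letters occurring in w differs from the set of letters occurring in w'. Then there exists a single letter μ (a subset of {1,…,n}) such that exactly one of the one-letter extensions w·μ and w'·μ belongs to L_n; here L_n is the set of all nonempty words μ₁μ₂…μ_k μ (with k ≥ 0) over this alphabet such that μ_i ∩ μ ≠ ∅ for every i ∈ {1,…,k}. -/
import Mathlib


/-- `Ln n` is the language of all nonempty words `μ₁ μ₂ … μ_k μ` (with `k ≥ 0`)
over the alphabet of all subsets of `Fin n` such that every letter other than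
the last one has nonempty intersection with the last letter. -/
def Ln (n : ℕ) : Language (Finset (Fin n)) :=
  { w | ∃ (ws : List (Finset (Fin n))) (μ : Finset (Fin n)),
      w = ws ++ [μ] ∧ ∀ μi ∈ ws, (μi ∩ μ).Nonempty }

lemma mem_Ln_iff (n : ℕ) (w : List (Finset (Fin n))) (μ : Finset (Fin n)) :
    w ++ [μ] ∈ Ln n ↔ ∀ x ∈ w, (x ∩ μ).Nonempty := by
  constructor
  · rintro ⟨ws, μ', h, hint⟩
    obtain ⟨h1, h2⟩ := List.append_inj' h rfl
    simp only [List.cons.injEq] at h2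
    subst h1; rw [h2.1]; exact hint
  · intro h; exact ⟨w, μ, rfl, h⟩

lemma key_lemma (n : ℕ) (w w' : List (Finset (Fin n)))
    (hw : ∀ S ∈ w, S.card = n / 2) (hw' : ∀ S ∈ w', S.card = n / 2)
    (S : Finset (Fin n)) (hS : S ∈ w) (hS' : S ∉ w') :
    ∃ μ : Finset (Fin n), Xor' (w ++ [μ] ∈ Ln n) (w' ++ [μ] ∈ Ln n) := by
  refine ⟨Sᶜ, Or.inr ⟨?_, ?_⟩⟩
  · rw [mem_Ln_iff]
    intro T hT
    by_contra hempty
    rw [Finset.not_nonempty_iff_eq_empty] at hempty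
    have hsub : T ⊆ S := by
      intro x hx
      by_contra hxS
      have : x ∈ T ∩ Sᶜ := Finset.mem_inter.2 ⟨hx, Finset.mem_compl.2 hxS⟩
      simp [hempty] at this
    have : T = S := Finset.eq_of_subset_of_card_le hsub
      (by rw [hw S hS, hw' T hT])
    exact hS' (this ▸ hT)
  · rw [mem_Ln_iff]
    intro h
    have := h S hS
    simp at this

/-- If `w` and `w'` are words over the alphabet of all subsets of `Fin n`, all
of whose letters have cardinality exactly `⌊n/2⌋`, and the sets of letters
occurring in `w` and `w'` differ, then some one-letter extension distinguishes
`w` and `w'` with respect to `Ln n`. -/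
theorem exists_one_letter_extension_distinguishing
    (n : ℕ) (w w' : List (Finset (Fin n)))
    (hw : ∀ S ∈ w, S.card = n / 2) (hw' : ∀ S ∈ w', S.card = n / 2)
    (hne : w.toFinset ≠ w'.toFinset) :
    ∃ μ : Finset (Fin n), Xor' (w ++ [μ] ∈ Ln n) (w' ++ [μ] ∈ Ln n) := by
  have : ∃ S, (S ∈ w ∧ S ∉ w') ∨ (S ∈ w' ∧ S ∉ w) := by
    by_contra h
    push_neg at h
    apply hne
    ext S
    simp only [List.mem_toFinset]
    have := h S
    tauto
  obtain ⟨S, hS | hS⟩ := this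
  · exact key_lemma n w w' hw hw' S hS.1 hS.2
  · obtain ⟨μ, hμ⟩ := key_lemma n w' w hw' hw S hS.1 hS.2
    exact ⟨μ, hμ.symm⟩
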